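/- Let G be a group and Z a normal subgroup contained in the hypercenter of G, built up by a finite series of G-invariant subgroups 1 = Z_0 ≤ Z_1 ≤ ... ≤ Z_{n+1} = Z with each factor Z_{j+1}/Z_j central in G/Z_j. Then G/C_G(Z) is nilpotent. -/

import Mathlib

open Subgroup
open commutatorElement

/-- Three subgroups lemma, relative version: modulo a normal subgroup. -/
lemma three_subgroups_le {G : Type*} [Group G] {H₁ H₂ H₃ N : Subgroup G} (hN : N.Normal)
    (h1 : ⁅⁅H₂, H₃⁆, H₁⁆ ≤ N) (h2 : ⁅⁅H₃, H₁⁆, H₂⁆ ≤ N) : ⁅⁅H₁, H₂⁆, H₃⁆ ≤ N := by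
  have : (QuotientGroup.mk' N).ker = N := QuotientGroup.ker_mk' N
  rw [← this, ← Subgroup.map_eq_bot_iff, Subgroup.map_commutator, Subgroup.map_commutator] at h1 h2 ⊢
  exact Subgroup.commutator_commutator_eq_bot_of_rotate h1 h2

lemma comm_top_ucs {G : Type*} [Group G] (j : ℕ) :
    ⁅(⊤ : Subgroup G), Subgroup.upperCentralSeries G j⁆ ≤ Subgroup.upperCentralSeries G (j - 1) := by
  cases j with
  | zero => simp [Subgroup.upperCentralSeries_zero]
  | succ j =>
    rw [Subgroup.commutator_le]
    intro g _ z hz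
    simp only [Nat.add_sub_cancel]
    have := (Subgroup.mem_upperCentralSeries_succ_iff.mp hz) g
    have h' : (z * g * z⁻¹ * g⁻¹)⁻¹ ∈ Subgroup.upperCentralSeries G j :=
      (Subgroup.upperCentralSeries G j).inv_mem this
    simpa [commutatorElement_def, mul_assoc] using h'

lemma lcs_comm_ucs {G : Type*} [Group G] (i : ℕ) : ∀ j : ℕ,
    ⁅Subgroup.lowerCentralSeries (⊤ : Subgroup G) i, Subgroup.upperCentralSeries G j⁆ ≤ Subgroup.upperCentralSeries G (j - i - 1) := by
  induction i with
  | zero => intro j; simpa using comm_top_ucs j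
  | succ i ih =>
    intro j
    rw [Subgroup.lowerCentralSeries_succ]
    have key : j - (i + 1) - 1 = j - 1 - i - 1 := by omega
    rw [key]
    apply three_subgroups_le (by infer_instance)
    · -- ⁅⁅⊤, ζ_j⁆, γ_i⁆ ≤ ζ_{j-1-i-1}
      calc ⁅⁅(⊤ : Subgroup G), Subgroup.upperCentralSeries G j⁆, Subgroup.lowerCentralSeries (⊤ : Subgroup G) i⁆
          ≤ ⁅Subgroup.lowerCentralSeries (⊤ : Subgroup G) i, Subgroup.upperCentralSeries G (j-1)⁆ := by
            rw [Subgroup.commutator_comm]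
            exact Subgroup.commutator_mono le_rfl (comm_top_ucs j)
        _ ≤ _ := ih (j - 1)
    · -- ⁅⁅ζ_j, γ_i⁆, ⊤⁆ ≤ ζ_{j-1-i-1}
      calc ⁅⁅Subgroup.upperCentralSeries G j, Subgroup.lowerCentralSeries (⊤ : Subgroup G) i⁆, (⊤ : Subgroup G)⁆
          ≤ ⁅(⊤ : Subgroup G), Subgroup.upperCentralSeries G (j - i - 1)⁆ := by
            rw [Subgroup.commutator_comm]
            exact Subgroup.commutator_mono le_rfl
              (by rw [Subgroup.commutator_comm]; exact ih j)
        _ ≤ Subgroup.upperCentralSeries G (j - i - 1 - 1) := comm_top_ucs _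
        _ ≤ _ := by rw [show j - i - 1 - 1 = j - 1 - i - 1 by omega]

lemma lcs_map_surj {G H : Type*} [Group G] [Group H] (f : G →* H)
    (hf : Function.Surjective f) (n : ℕ) :
    Subgroup.map f (Subgroup.lowerCentralSeries (⊤ : Subgroup G) n) = Subgroup.lowerCentralSeries (⊤ : Subgroup H) n := by
  induction n with
  | zero => simpa using Subgroup.map_top_of_surjective f hf
  | succ n ih =>
    show Subgroup.map f ⁅Subgroup.lowerCentralSeries (⊤ : Subgroup G) n, (⊤ : Subgroup G)⁆ =
      ⁅Subgroup.lowerCentralSeries (⊤ : Subgroup H) n, (⊤ : Subgroup H)⁆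
    rw [Subgroup.map_commutator, ih, Subgroup.map_top_of_surjective f hf]

/-- **Kaloujnine's theorem.** If `Z` is a normal subgroup of `G` possessing a
finite `G`-central series (equivalently `Z ≤ ζ_n(G)` for some finite `n`),
then `G/C_G(Z)` is nilpotent.  (The normality of the centralizer of the
normal subgroup `Z` is supplied as a hypothesis, being automatic.) -/
theorem kaloujnine (G : Type*) [Group G] (Z : Subgroup G) (hZn : Z.Normal)
    (n : ℕ) (hZ : Z ≤ _root_.upperCentralSeries G n)
    (hc : (Subgroup.centralizer (Z : Set G)).Normal) :
    Group.IsNilpotent (G ⧸ Subgroup.centralizer (Z : Set G)) := by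
  have key : Subgroup.lowerCentralSeries (⊤ : Subgroup G) n ≤ Subgroup.centralizer (Z : Set G) := by
    intro g hg
    rw [Subgroup.mem_centralizer_iff]
    intro z hz
    have : ⁅g, z⁆ ∈ ⁅Subgroup.lowerCentralSeries (⊤ : Subgroup G) n, Subgroup.upperCentralSeries G n⁆ :=
      Subgroup.commutator_mem_commutator hg (hZ hz)
    have hb : ⁅g, z⁆ ∈ Subgroup.upperCentralSeries G (n - n - 1) := lcs_comm_ucs n n this
    rw [show n - n - 1 = 0 by omega, Subgroup.upperCentralSeries_zero, Subgroup.mem_bot] at hb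
    exact (commutatorElement_eq_one_iff_mul_comm.mp hb).symm
  rw [Subgroup.nilpotent_iff_lowerCentralSeries]
  refine ⟨n, ?_⟩
  rw [← lcs_map_surj (QuotientGroup.mk' _) QuotientGroup.mk_surjective n,
    Subgroup.map_eq_bot_iff, QuotientGroup.ker_mk']
  exact key
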